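/- Let λ > e·√2 be a real number and for each n let s_n = ⌈λ·√n⌉. Then n · C(n, s_n) · 2^{s_n − 1} / (s_n)! tends to 0 as n → ∞ (where the terms are interpreted as 0 whenever s_n > n). -/

import Mathlib

open Filter

private lemma tendsto_sqrt_nat : Tendsto (fun n : ℕ => Real.sqrt n) atTop atTop := by
  refine tendsto_atTop_atTop.mpr fun b => ⟨⌈b ^ 2⌉₊, fun n hn => ?_⟩
  rcases le_or_gt b 0 with hb | hb
  · exact hb.trans (Real.sqrt_nonneg _)
  · rw [Real.le_sqrt hb.le (Nat.cast_nonneg _)]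
    calc (b : ℝ) ^ 2 ≤ (⌈b ^ 2⌉₊ : ℝ) := Nat.le_ceil _
    _ ≤ n := by exact_mod_cast hn

private lemma pow_self_le_factorial_mul_exp (s : ℕ) :
    (s : ℝ) ^ s ≤ (s.factorial : ℝ) * Real.exp s := by
  have h := Real.pow_div_factorial_le_exp (x := (s : ℝ)) (Nat.cast_nonneg s) s
  have hfac : (0 : ℝ) < s.factorial := by exact_mod_cast s.factorial_pos
  calc (s : ℝ) ^ s = (s : ℝ) ^ s / s.factorial * s.factorial := by
        field_simp
  _ ≤ Real.exp s * s.factorial := by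
        exact mul_le_mul_of_nonneg_right h hfac.le
  _ = (s.factorial : ℝ) * Real.exp s := mul_comm _ _

/-- For `λ > e·√2` and `sₙ = ⌈λ√n⌉`, the sequence `n·C(n,sₙ)·2^{sₙ−1}/sₙ!` tends to `0`
as `n → ∞` (the binomial coefficient `C(n,sₙ)`, hence the whole term, vanishes whenever
`sₙ > n`). -/
theorem n_mul_phi_tendsto_zero (lam : ℝ) (hlam : Real.exp 1 * Real.sqrt 2 < lam) :
    Tendsto (fun n : ℕ =>
        (n : ℝ) * (n.choose ⌈lam * Real.sqrt n⌉₊) *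
          2 ^ (⌈lam * Real.sqrt n⌉₊ - 1) / ((⌈lam * Real.sqrt n⌉₊).factorial : ℝ))
      atTop (nhds 0) := by
  have he : (0 : ℝ) < Real.exp 1 := Real.exp_pos 1
  have hlam0 : (0 : ℝ) < lam := lt_trans (by positivity) hlam
  -- the ratio r = 2 e² / λ² is in (0,1)
  set r : ℝ := 2 * Real.exp 1 ^ 2 / lam ^ 2 with hr_def
  have hr0 : 0 < r := by positivity
  have hlam_sq : 2 * Real.exp 1 ^ 2 < lam ^ 2 := by
    have := mul_self_lt_mul_self (by positivity) hlam
    have h2 : Real.exp 1 * Real.sqrt 2 * (Real.exp 1 * Real.sqrt 2)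
        = 2 * Real.exp 1 ^ 2 := by
      have : Real.sqrt 2 * Real.sqrt 2 = 2 := Real.mul_self_sqrt (by norm_num)
      ring_nf
      nlinarith [this]
    nlinarith [this]
  have hr1 : r < 1 := by
    rw [hr_def, div_lt_one (by positivity)]
    exact hlam_sq
  have hlogr : Real.log r < 0 := Real.log_neg hr0 hr1
  set c : ℝ := -(lam * Real.log r) with hc_def
  have hc0 : 0 < c := by
    rw [hc_def, neg_pos]
    exact mul_neg_of_pos_of_neg hlam0 hlogr
  -- the dominating sequence tends to 0
  have hU : Tendsto (fun n : ℕ => (n : ℝ) * Real.exp (-(c * Real.sqrt n))) atTop (nhds 0) := by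
    have hg : Tendsto (fun n : ℕ => c * Real.sqrt n) atTop atTop :=
      (tendsto_const_mul_atTop_of_pos hc0).mpr tendsto_sqrt_nat
    have h2 := (Real.tendsto_pow_mul_exp_neg_atTop_nhds_zero 2).comp hg
    have h3 : Tendsto (fun n : ℕ =>
        c⁻¹ ^ 2 * ((c * Real.sqrt n) ^ 2 * Real.exp (-(c * Real.sqrt n))))
        atTop (nhds (c⁻¹ ^ 2 * 0)) := h2.const_mul _
    rw [mul_zero] at h3
    refine h3.congr fun n => ?_
    have hsq : Real.sqrt n ^ 2 = (n : ℝ) := Real.sq_sqrt (Nat.cast_nonneg n)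
    field_simp
    ring_nf
    rw [hsq]
  -- squeeze
  refine squeeze_zero (fun n => by positivity) (fun n => ?_) hU
  set s := ⌈lam * Real.sqrt n⌉₊ with hs_def
  have hfac : (0 : ℝ) < s.factorial := by exact_mod_cast s.factorial_pos
  rcases Nat.eq_zero_or_pos n with hn | hn
  · subst hn
    simp only [Nat.cast_zero, zero_mul, zero_div]
    positivity
  have hn0 : (0 : ℝ) < n := by exact_mod_cast hn
  have hsqrtn : 0 < Real.sqrt n := Real.sqrt_pos.mpr hn0
  have hs1 : 1 ≤ s := by
    rw [hs_def, Nat.one_le_ceil_iff]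
    positivity
  have hs0 : (0 : ℝ) < s := by exact_mod_cast hs1
  have hsceil : lam * Real.sqrt n ≤ s := Nat.le_ceil _
  -- step 1: bound the term by n * (2 e² n / s²)^s
  have hchoose : (n.choose s : ℝ) ≤ (n : ℝ) ^ s / s.factorial := by
    have := Nat.choose_le_pow_div (α := ℝ) s n
    simpa using this
  have hpow2 : (2 : ℝ) ^ (s - 1) ≤ 2 ^ s :=
    pow_le_pow_right₀ (by norm_num) (Nat.sub_le s 1)
  have hfac_inv : ((s.factorial : ℝ))⁻¹ ≤ Real.exp s / (s : ℝ) ^ s := by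
    rw [le_div_iff₀ (by positivity), inv_mul_le_iff₀ hfac]
    calc (s : ℝ) ^ s ≤ (s.factorial : ℝ) * Real.exp s := pow_self_le_factorial_mul_exp s
    _ = (s.factorial : ℝ) * Real.exp s := rfl
  have key : (n : ℝ) * (n.choose s) * 2 ^ (s - 1) / s.factorial
      ≤ (n : ℝ) * r ^ s := by
    have step1 : (n : ℝ) * (n.choose s) * 2 ^ (s - 1) / s.factorial
        ≤ (n : ℝ) * ((n : ℝ) ^ s / s.factorial) * 2 ^ s / s.factorial := by
      gcongr
    have hb : (n : ℝ) ^ s / (s.factorial : ℝ) ≤ (n : ℝ) ^ s * (Real.exp s / (s : ℝ) ^ s) := by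
      rw [div_eq_mul_inv]
      exact mul_le_mul_of_nonneg_left hfac_inv (by positivity)
    have step2 : (n : ℝ) * ((n : ℝ) ^ s / s.factorial) * 2 ^ s / s.factorial
        ≤ (n : ℝ) * ((n : ℝ) ^ s * (Real.exp s / (s : ℝ) ^ s)) * 2 ^ s
            * (Real.exp s / (s : ℝ) ^ s) := by
      rw [div_eq_mul_inv]
      refine mul_le_mul ?_ hfac_inv (by positivity) (by positivity)
      refine mul_le_mul ?_ le_rfl (by positivity) (by positivity)
      exact mul_le_mul_of_nonneg_left hb hn0.le
    have hexp_pow : Real.exp (s : ℝ) = Real.exp 1 ^ s := by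
      rw [← Real.exp_nat_mul]; norm_num
    have step3 : (n : ℝ) * ((n : ℝ) ^ s * (Real.exp s / (s : ℝ) ^ s)) * 2 ^ s
            * (Real.exp s / (s : ℝ) ^ s)
        = (n : ℝ) * (2 * Real.exp 1 ^ 2 * n / (s : ℝ) ^ 2) ^ s := by
      have hss : ((s : ℝ) ^ s) ≠ 0 := by positivity
      have hpow : (2 * Real.exp 1 ^ 2 * n / (s : ℝ) ^ 2) ^ s
          = 2 ^ s * (Real.exp 1 ^ s) ^ 2 * (n : ℝ) ^ s / ((s : ℝ) ^ s) ^ 2 := by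
        rw [div_pow, mul_pow, mul_pow, pow_right_comm (Real.exp 1) 2 s,
          pow_right_comm ((s : ℝ)) 2 s]
      rw [hexp_pow, hpow]
      field_simp
    have hbase : 2 * Real.exp 1 ^ 2 * n / (s : ℝ) ^ 2 ≤ r := by
      rw [hr_def, div_le_div_iff₀ (by positivity) (by positivity)]
      have hsq : lam ^ 2 * n ≤ (s : ℝ) ^ 2 := by
        have h := mul_self_le_mul_self (by positivity : (0:ℝ) ≤ lam * Real.sqrt n) hsceil
        have hss2 : Real.sqrt n * Real.sqrt n = (n : ℝ) := Real.mul_self_sqrt hn0.le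
        calc lam ^ 2 * n = (lam * Real.sqrt n) * (lam * Real.sqrt n) := by
              linear_combination (-(lam ^ 2)) * hss2
        _ ≤ (s : ℝ) * s := h
        _ = (s : ℝ) ^ 2 := (sq (s : ℝ)).symm
      nlinarith [hsq, he, hn0]
    have step4 : (n : ℝ) * (2 * Real.exp 1 ^ 2 * n / (s : ℝ) ^ 2) ^ s
        ≤ (n : ℝ) * r ^ s := by
      refine mul_le_mul_of_nonneg_left ?_ hn0.le
      exact pow_le_pow_left₀ (by positivity) hbase s
    calc (n : ℝ) * (n.choose s) * 2 ^ (s - 1) / s.factorial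
        ≤ (n : ℝ) * ((n : ℝ) ^ s / s.factorial) * 2 ^ s / s.factorial := step1
    _ ≤ _ := step2
    _ = (n : ℝ) * (2 * Real.exp 1 ^ 2 * n / (s : ℝ) ^ 2) ^ s := step3
    _ ≤ (n : ℝ) * r ^ s := step4
  -- step 2: r^s ≤ exp(-(c √n))
  have hrs : r ^ s ≤ Real.exp (-(c * Real.sqrt n)) := by
    have h1 : r ^ s = Real.exp ((s : ℝ) * Real.log r) := by
      rw [Real.exp_nat_mul, Real.exp_log hr0]
    rw [h1, Real.exp_le_exp, hc_def]
    have := mul_le_mul_of_nonpos_right hsceil hlogr.le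
    calc (s : ℝ) * Real.log r ≤ lam * Real.sqrt n * Real.log r := this
    _ = -(-(lam * Real.log r) * Real.sqrt n) := by ring
  calc (n : ℝ) * (n.choose s) * 2 ^ (s - 1) / s.factorial
      ≤ (n : ℝ) * r ^ s := key
  _ ≤ (n : ℝ) * Real.exp (-(c * Real.sqrt n)) := mul_le_mul_of_nonneg_left hrs hn0.le
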